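/- If G is a connected graph with girth(G) ≥ 5 such that the line graph L(G) is well-covered, then cochord(G) = m(G). -/

import Mathlib

open SimpleGraph

variable {V : Type*}

/-- The closed neighborhood `N_G[x]` of a vertex. -/
def closedNbhd (G : SimpleGraph V) (x : V) : Set V := insert x (G.neighborSet x)

/-- `x` is codominated: some `y ≠ x` has `N_G[y] ⊆ N_G[x]`. -/
def Codominated (G : SimpleGraph V) (x : V) : Prop :=
  ∃ y, y ≠ x ∧ closedNbhd G y ⊆ closedNbhd G x

/-- `S` is an independent set of `G`. -/
def IsIndep (G : SimpleGraph V) (S : Set V) : Prop :=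
  ∀ ⦃u⦄, u ∈ S → ∀ ⦃v⦄, v ∈ S → ¬ G.Adj u v

/-- `x` is a shedding vertex of `G`: every independent set of `G - N_G[x]`
extends by a neighbor of `x`. -/
def SheddingVertex (G : SimpleGraph V) (x : V) : Prop :=
  ∀ S : Set V, S ⊆ (closedNbhd G x)ᶜ → IsIndep G S →
    ∃ v ∈ G.neighborSet x, IsIndep G (insert v S)

/-- The closed neighborhood `N_G[I]` of a set of vertices. -/
def closedNbhdSet (G : SimpleGraph V) (I : Set V) : Set V :=
  I ∪ {v | ∃ u ∈ I, G.Adj u v}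

/-- `x` is codominated in the subgraph of `G` induced on `A`. -/
def CodominatedOn (G : SimpleGraph V) (A : Finset V) (x : V) : Prop :=
  ∃ y ∈ A, y ≠ x ∧ ∀ z ∈ A, (z = y ∨ G.Adj y z) → (z = x ∨ G.Adj x z)

/-- The subgraph of `G` induced on `A` is codismantlable. -/
def CodismantlableOn (G : SimpleGraph V) [DecidableEq V] (A : Finset V) : Prop :=
  (∀ x ∈ A, ∀ y ∈ A, ¬ G.Adj x y) ∨
    ∃ x, ∃ h : x ∈ A, CodominatedOn G A x ∧ CodismantlableOn G (A.erase x)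
termination_by A.card
decreasing_by exact Finset.card_erase_lt_of_mem h

/-- `G` is codismantlable. -/
def Codismantlable (G : SimpleGraph V) [Fintype V] [DecidableEq V] : Prop :=
  CodismantlableOn G Finset.univ

/-- A maximal independent set of `G`. -/
def MaxIndep (G : SimpleGraph V) (S : Set V) : Prop :=
  IsIndep G S ∧ ∀ T : Set V, IsIndep G T → S ⊆ T → S = T

/-- `G` is well-covered: all maximal independent sets have the same size. -/
def WellCovered (G : SimpleGraph V) : Prop :=
  ∀ S T : Set V, MaxIndep G S → MaxIndep G T → S.ncard = T.ncard

/-- `G` has no induced cycle of length `n`. -/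
def CycleFree (G : SimpleGraph V) (n : ℕ) : Prop :=
  IsEmpty (cycleGraph n ↪g G)

/-- `G` is chordal: no induced cycle of length at least 4. -/
def Chordal (G : SimpleGraph V) : Prop :=
  ∀ n, 4 ≤ n → CycleFree G n

/-- `M` is a matching of `G` (as a set of edges). -/
def IsMatchingSet (G : SimpleGraph V) (M : Finset (Sym2 V)) : Prop :=
  (∀ e ∈ M, e ∈ G.edgeSet) ∧
    ∀ e ∈ M, ∀ f ∈ M, e ≠ f → ∀ v : V, v ∈ e → v ∉ f

/-- `M` is an induced matching of `G`. -/
def IsInducedMatching (G : SimpleGraph V) (M : Finset (Sym2 V)) : Prop :=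
  IsMatchingSet G M ∧
    ∀ e ∈ M, ∀ f ∈ M, e ≠ f → ∀ u : V, u ∈ e → ∀ v : V, v ∈ f → ¬ G.Adj u v

/-- The matching number `m(G)`. -/
noncomputable def matchNum (G : SimpleGraph V) : ℕ :=
  sSup {n | ∃ M : Finset (Sym2 V), IsMatchingSet G M ∧ M.card = n}

/-- The induced matching number `im(G)`. -/
noncomputable def indMatchNum (G : SimpleGraph V) : ℕ :=
  sSup {n | ∃ M : Finset (Sym2 V), IsInducedMatching G M ∧ M.card = n}

open Classical in
/-- The vertices of `A` outside the closed neighborhood of `x`. -/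
noncomputable def delNbhd (G : SimpleGraph V) [DecidableEq V] (A : Finset V) (x : V) : Finset V :=
  A.filter (fun z => ¬(z = x ∨ G.Adj x z))

/-- `x` is a shedding vertex of the subgraph of `G` induced on `A`. -/
def SheddingOn (G : SimpleGraph V) (A : Finset V) (x : V) : Prop :=
  ∀ S : Set V, S ⊆ ↑A → (∀ u ∈ S, ¬(u = x ∨ G.Adj x u)) → IsIndep G S →
    ∃ v ∈ A, G.Adj x v ∧ IsIndep G (insert v S)

lemma delNbhd_ssubset (G : SimpleGraph V) [DecidableEq V] {A : Finset V} {x : V}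
    (h : x ∈ A) : delNbhd G A x ⊂ A := by
  classical
  refine (Finset.ssubset_iff_of_subset (Finset.filter_subset _ _)).mpr ⟨x, h, ?_⟩
  simp [delNbhd]

/-- The subgraph of `G` induced on `A` is vertex decomposable. -/
noncomputable def VertexDecomposableOn (G : SimpleGraph V) [DecidableEq V] (A : Finset V) :
    Prop :=
  (∀ x ∈ A, ∀ y ∈ A, ¬ G.Adj x y) ∨
    ∃ x, ∃ h : x ∈ A, SheddingOn G A x ∧ VertexDecomposableOn G (A.erase x) ∧
      VertexDecomposableOn G (delNbhd G A x)
termination_by A.card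
decreasing_by
  · exact Finset.card_erase_lt_of_mem h
  · exact Finset.card_lt_card (delNbhd_ssubset G h)

/-- `G` is vertex decomposable. -/
noncomputable def VertexDecomposable (G : SimpleGraph V) [Fintype V] [DecidableEq V] : Prop :=
  VertexDecomposableOn G Finset.univ

/-- The restriction of `G` to `A` codismantles to its restriction to `B`. -/
inductive CodisTo (G : SimpleGraph V) [DecidableEq V] : Finset V → Finset V → Prop
  | refl (A : Finset V) : CodisTo G A A
  | step {A B : Finset V} {x : V} (h : x ∈ A) (hc : CodominatedOn G A x)
      (ht : CodisTo G (A.erase x) B) : CodisTo G A B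

/-- `L` is a codismantling sequence for the subgraph of `G` induced on `A`. -/
def CodisSeq (G : SimpleGraph V) [DecidableEq V] : Finset V → List V → Prop
  | A, [] => ∀ x ∈ A, ∀ y ∈ A, ¬ G.Adj x y
  | A, x :: xs => x ∈ A ∧ CodominatedOn G A x ∧ CodisSeq G (A.erase x) xs

/-- `C` is a vertex cover of `G`. -/
def IsVertexCover (G : SimpleGraph V) (C : Set V) : Prop :=
  ∀ ⦃u v : V⦄, G.Adj u v → u ∈ C ∨ v ∈ C

/-- The co-chordal cover number: the minimum number of co-chordal subgraphs of `G`
covering all edges of `G`. -/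
noncomputable def cochord (G : SimpleGraph V) : ℕ :=
  sInf {k | ∃ H : Fin k → G.Subgraph, (∀ i, Chordal ((H i).coeᶜ)) ∧
    ∀ e ∈ G.edgeSet, ∃ i, e ∈ (H i).edgeSet}

/-- The domination number of a graph. -/
noncomputable def domNum {W : Type*} (K : SimpleGraph W) : ℕ :=
  sInf {n | ∃ D : Finset W, (∀ v : W, v ∈ D ∨ ∃ u ∈ D, K.Adj u v) ∧ D.card = n}



section AuxProofs
variable {G : SimpleGraph V}

lemma aux_notri (hg : 5 ≤ G.egirth) {a b c : V}
    (hab : G.Adj a b) (hbc : G.Adj b c) (hca : G.Adj c a) : False := by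
  have hw : (Walk.cons hab (Walk.cons hbc (Walk.cons hca Walk.nil))).IsCycle := by
    rw [Walk.cons_isCycle_iff]
    refine ⟨?_, ?_⟩
    · simp [Walk.cons_isPath_iff, hbc.ne, hca.ne, hca.ne', hab.ne']
    · simp [Walk.edges_cons, Sym2.eq_iff, hab.ne, hbc.ne, hca.ne, hca.ne']
  have h5 := le_egirth.mp hg a _ hw
  simp only [Walk.length_cons, Walk.length_nil] at h5
  norm_num at h5

lemma aux_noc4 (hg : 5 ≤ G.egirth) {a b c d : V}
    (hab : G.Adj a b) (hbc : G.Adj b c) (hcd : G.Adj c d) (hda : G.Adj d a)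
    (hac : a ≠ c) (hbd : b ≠ d) : False := by
  have hw : (Walk.cons hab (Walk.cons hbc (Walk.cons hcd (Walk.cons hda Walk.nil)))).IsCycle := by
    rw [Walk.cons_isCycle_iff]
    refine ⟨?_, ?_⟩
    · simp [Walk.cons_isPath_iff, hbc.ne, hcd.ne, hda.ne, hda.ne', hac, hac.symm, hbd, hab.ne']
    · simp [Walk.edges_cons, Sym2.eq_iff, hab.ne, hbc.ne, hcd.ne, hda.ne, hda.ne', hac, hbd]
  have h5 := le_egirth.mp hg a _ hw
  simp only [Walk.length_cons, Walk.length_nil] at h5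
  norm_num at h5

private lemma aux_circ {N : ℕ} (hN : 4 ≤ N) {a b : ℕ} (ha : a < N) (hb : b < N)
    (h : (N - b + a) % N = 1) : a = b + 1 ∨ (a = 0 ∧ b = N - 1) := by
  rcases Nat.lt_or_ge (N - b + a) N with hlt | hge
  · rw [Nat.mod_eq_of_lt hlt] at h
    omega
  · rw [Nat.mod_eq_sub_mod hge, Nat.mod_eq_of_lt (by omega)] at h
    omega

lemma aux_cyc_notri {n : ℕ} (hn : 4 ≤ n) {i j k : Fin n}
    (hij : (cycleGraph n).Adj i j) (hjk : (cycleGraph n).Adj j k)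
    (hik : (cycleGraph n).Adj i k) : False := by
  rw [cycleGraph_adj'] at hij hjk hik
  have hi := i.isLt; have hj := j.isLt; have hk := k.isLt
  simp only [Fin.sub_def] at hij hjk hik
  have h1 : i.val = j.val + 1 ∨ (i.val = 0 ∧ j.val = n - 1) ∨
      j.val = i.val + 1 ∨ (j.val = 0 ∧ i.val = n - 1) := by
    rcases hij with h | h
    · rcases aux_circ hn hi hj h with h' | h'
      · exact Or.inl h'
      · exact Or.inr (Or.inl h')
    · rcases aux_circ hn hj hi h with h' | h'
      · exact Or.inr (Or.inr (Or.inl h'))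
      · exact Or.inr (Or.inr (Or.inr h'))
  have h2 : j.val = k.val + 1 ∨ (j.val = 0 ∧ k.val = n - 1) ∨
      k.val = j.val + 1 ∨ (k.val = 0 ∧ j.val = n - 1) := by
    rcases hjk with h | h
    · rcases aux_circ hn hj hk h with h' | h'
      · exact Or.inl h'
      · exact Or.inr (Or.inl h')
    · rcases aux_circ hn hk hj h with h' | h'
      · exact Or.inr (Or.inr (Or.inl h'))
      · exact Or.inr (Or.inr (Or.inr h'))
  have h3 : i.val = k.val + 1 ∨ (i.val = 0 ∧ k.val = n - 1) ∨
      k.val = i.val + 1 ∨ (k.val = 0 ∧ i.val = n - 1) := by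
    rcases hik with h | h
    · rcases aux_circ hn hi hk h with h' | h'
      · exact Or.inl h'
      · exact Or.inr (Or.inl h')
    · rcases aux_circ hn hk hi h with h' | h'
      · exact Or.inr (Or.inr (Or.inl h'))
      · exact Or.inr (Or.inr (Or.inr h'))
  omega


private lemma aux_fin4a : ∀ ip iq : Fin 4, ip ≠ iq →
    ∃ i j : Fin 4, i ≠ j ∧ i ≠ ip ∧ i ≠ iq ∧ j ≠ ip ∧ j ≠ iq := by decide

private lemma aux_fin4b : ∀ ip iq i j : Fin 4, ip ≠ iq → i ≠ j → i ≠ ip → i ≠ iq →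
    j ≠ ip → j ≠ iq → (cycleGraph 4).Adj i j → (cycleGraph 4).Adj ip iq := by decide


end AuxProofs

/-- The double star subgraph on the two endpoints of an edge `e`. -/
def auxStar (G : SimpleGraph V) (e : Sym2 V) : G.Subgraph where
  verts := Set.univ
  Adj u v := G.Adj u v ∧ (u ∈ e ∨ v ∈ e)
  adj_sub h := h.1
  edge_vert _ := Set.mem_univ _
  symm := ⟨fun u v h => ⟨h.1.symm, h.2.symm⟩⟩

lemma aux_star_chordal (G : SimpleGraph V) (e : Sym2 V) (he : e ∈ G.edgeSet) :
    Chordal ((auxStar G e).coeᶜ) := by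
  classical
  induction e using Sym2.ind with
  | _ p q =>
  intro n hn
  constructor
  intro emb
  have hpq : G.Adj p q := he
  -- vertices not in {p,q} are pairwise adjacent in the complement
  have fact1 : ∀ i j : Fin n, i ≠ j → ¬ (p = ↑(emb i) ∨ q = ↑(emb i)) →
      ¬ (p = ↑(emb j) ∨ q = ↑(emb j)) → (cycleGraph n).Adj i j := by
    intro i j hij hi hj
    rw [← emb.map_rel_iff]
    refine ⟨fun h => hij (emb.injective h), fun h => ?_⟩
    rcases h.2 with h' | h' <;> rw [Sym2.mem_iff] at h' <;> tauto
  set S : Finset (Fin n) :=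
    Finset.univ.filter (fun i => p = ↑(emb i) ∨ q = ↑(emb i)) with hS
  set T : Finset (Fin n) :=
    Finset.univ.filter (fun i => ¬ (p = ↑(emb i) ∨ q = ↑(emb i))) with hT
  have hScard : S.card ≤ 2 := by
    have : S.card ≤ ({p, q} : Finset V).card := by
      apply Finset.card_le_card_of_injOn (fun i => (↑(emb i) : V))
      · intro i hi
        rw [hS, Finset.mem_coe, Finset.mem_filter] at hi
        rcases hi.2 with h | h
        · simp [← h]
        · simp [← h]
      · intro i _ j _ hij
        exact emb.injective (Subtype.ext hij)
    calc S.card ≤ ({p, q} : Finset V).card := this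
    _ ≤ 2 := Finset.card_insert_le _ _ |>.trans (by simp)
  have hTcard : T.card ≤ 2 := by
    by_contra hT3
    push_neg at hT3
    obtain ⟨i, hi, j, hj, k, hk, hij, hik, hjk⟩ := Finset.two_lt_card.mp hT3
    rw [hT, Finset.mem_filter] at hi hj hk
    exact aux_cyc_notri hn (fact1 i j hij hi.2 hj.2) (fact1 j k hjk hj.2 hk.2)
      (fact1 i k hik hi.2 hk.2)
  have hsum : S.card + T.card = n := by
    rw [hS, hT]
    rw [Finset.card_filter_add_card_filter_not]
    simp
  have hn4 : n = 4 := by omega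
  subst hn4
  -- S has exactly two elements, mapping to p and q
  have hq : p ≠ q := hpq.ne
  have hpS : ∃ ip, p = ↑(emb ip) := by
    by_contra hno
    push_neg at hno
    have : S.card ≤ 1 := by
      apply Finset.card_le_one.mpr
      intro i hi j hj
      rw [hS, Finset.mem_filter] at hi hj
      have h1 : q = ↑(emb i) := hi.2.resolve_left (hno i)
      have h2 : q = ↑(emb j) := hj.2.resolve_left (hno j)
      exact emb.injective (Subtype.ext (h1 ▸ h2 ▸ rfl))
    omega
  have hqS : ∃ iq, q = ↑(emb iq) := by
    by_contra hno
    push_neg at hno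
    have : S.card ≤ 1 := by
      apply Finset.card_le_one.mpr
      intro i hi j hj
      rw [hS, Finset.mem_filter] at hi hj
      have h1 : p = ↑(emb i) := hi.2.resolve_right (hno i)
      have h2 : p = ↑(emb j) := hj.2.resolve_right (hno j)
      exact emb.injective (Subtype.ext (h1 ▸ h2 ▸ rfl))
    omega
  obtain ⟨ip, hip⟩ := hpS
  obtain ⟨iq, hiq⟩ := hqS
  have hipq : ip ≠ iq := by
    rintro rfl
    exact hq (hip.trans hiq.symm)
  have hnadj : ¬ (cycleGraph 4).Adj ip iq := by
    rw [← emb.map_rel_iff]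
    rintro ⟨-, hnot⟩
    refine hnot ⟨?_, Or.inl ?_⟩
    · rw [← hip, ← hiq]; exact hpq
    · rw [← hip]; exact Sym2.mem_mk_left p q
  -- the other two indices are in T, adjacent, and distinct from ip, iq
  have hTmem : ∀ i : Fin 4, i ≠ ip → i ≠ iq → i ∈ T := by
    intro i h1 h2
    rw [hT, Finset.mem_filter]
    refine ⟨Finset.mem_univ _, ?_⟩
    rintro (h | h)
    · exact h1 (emb.injective (Subtype.ext (hip ▸ h ▸ rfl)))
    · exact h2 (emb.injective (Subtype.ext (hiq ▸ h ▸ rfl)))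
  -- find the two remaining indices
  obtain ⟨i, j, hij, hiip, hiiq, hjip, hjiq⟩ := aux_fin4a ip iq hipq
  have hi := hTmem i hiip hiiq
  have hj := hTmem j hjip hjiq
  rw [hT, Finset.mem_filter] at hi hj
  have hadj := fact1 i j hij hi.2 hj.2
  exact hnadj (aux_fin4b ip iq i j hipq hij hiip hiiq hjip hjiq hadj)

lemma auxStar_adj (G : SimpleGraph V) (e : Sym2 V) (u v : V) :
    (auxStar G e).Adj u v ↔ G.Adj u v ∧ (u ∈ e ∨ v ∈ e) := Iff.rfl

section AuxProofs2
variable {G : SimpleGraph V}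

lemma aux_LA {H : G.Subgraph} (hch : Chordal H.coeᶜ) {a b c d : V}
    (h1 : H.Adj a b) (h2 : H.Adj c d) (hac : a ≠ c) (had : a ≠ d) (hbc : b ≠ c) (hbd : b ≠ d)
    (n1 : ¬ H.Adj a c) (n2 : ¬ H.Adj a d) (n3 : ¬ H.Adj b c) (n4 : ¬ H.Adj b d) : False := by
  have hab : a ≠ b := (H.adj_sub h1).ne
  have hcd : c ≠ d := (H.adj_sub h2).ne
  have hA : a ∈ H.verts := H.edge_vert h1
  have hB : b ∈ H.verts := H.edge_vert h1.symm
  have hC : c ∈ H.verts := H.edge_vert h2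
  have hD : d ∈ H.verts := H.edge_vert h2.symm
  have h1s : H.Adj b a := h1.symm
  have h2s : H.Adj d c := h2.symm
  have n1s : ¬ H.Adj c a := fun h => n1 h.symm
  have n2s : ¬ H.Adj d a := fun h => n2 h.symm
  have n3s : ¬ H.Adj c b := fun h => n3 h.symm
  have n4s : ¬ H.Adj d b := fun h => n4 h.symm
  have hacs := hac.symm; have hads := had.symm; have hbcs := hbc.symm; have hbds := hbd.symm
  have habs := hab.symm; have hcds := hcd.symm
  let f : Fin 4 → H.verts := ![⟨a,hA⟩, ⟨c,hC⟩, ⟨b,hB⟩, ⟨d,hD⟩]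
  refine (hch 4 le_rfl).false ⟨⟨f, ?_⟩, ?_⟩
  · intro i j
    fin_cases i <;> fin_cases j <;>
      simp_all [f, Subtype.ext_iff] <;> first | rfl | (intro h; exact absurd h (by tauto))
  · intro i j
    fin_cases i <;> fin_cases j <;>
      simp_all [f, compl_adj, Subgraph.coe_adj, Subtype.ext_iff, cycleGraph_adj] <;>
      first | decide | tauto

set_option maxHeartbeats 1000000 in
lemma aux_LB (hg : 5 ≤ G.egirth) {H : G.Subgraph} (hch : Chordal H.coeᶜ)
    {v1 v2 v3 v4 v5 : V} (h12 : H.Adj v1 v2) (h23 : H.Adj v2 v3) (h34 : H.Adj v3 v4)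
    (h45 : H.Adj v4 v5) (h51 : H.Adj v5 v1) : False := by
  have g12 := H.adj_sub h12; have g23 := H.adj_sub h23; have g34 := H.adj_sub h34
  have g45 := H.adj_sub h45; have g51 := H.adj_sub h51
  -- distance-2 distinctness
  have d13 : v1 ≠ v3 := fun h => aux_notri hg g34 g45 (h ▸ g51)
  have d24 : v2 ≠ v4 := fun h => aux_notri hg g12 (h ▸ g45) g51
  have d35 : v3 ≠ v5 := fun h => aux_notri hg g12 g23 (h ▸ g51)
  have d14 : v1 ≠ v4 := fun h => aux_notri hg g12 g23 (h ▸ g34)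
  have d25 : v2 ≠ v5 := fun h => aux_notri hg g23 g34 (h ▸ g45)
  -- chords are non-adjacent in G (hence in H)
  have N13 : ¬ H.Adj v1 v3 := fun h => aux_notri hg g12 g23 (H.adj_sub h).symm
  have N24 : ¬ H.Adj v2 v4 := fun h => aux_notri hg g23 g34 (H.adj_sub h).symm
  have N35 : ¬ H.Adj v3 v5 := fun h => aux_notri hg g34 g45 (H.adj_sub h).symm
  have N14 : ¬ H.Adj v1 v4 := fun h => aux_notri hg g45 g51 (H.adj_sub h)
  have N25 : ¬ H.Adj v2 v5 := fun h => aux_notri hg g51 g12 (H.adj_sub h)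
  have N13s : ¬ H.Adj v3 v1 := fun h => N13 h.symm
  have N24s : ¬ H.Adj v4 v2 := fun h => N24 h.symm
  have N35s : ¬ H.Adj v5 v3 := fun h => N35 h.symm
  have N14s : ¬ H.Adj v4 v1 := fun h => N14 h.symm
  have N25s : ¬ H.Adj v5 v2 := fun h => N25 h.symm
  have h12s := h12.symm; have h23s := h23.symm; have h34s := h34.symm
  have h45s := h45.symm; have h51s := h51.symm
  have e12 := g12.ne; have e23 := g23.ne; have e34 := g34.ne; have e45 := g45.ne
  have e51 := g51.ne
  have e12s := e12.symm; have e23s := e23.symm; have e34s := e34.symm; have e45s := e45.symm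
  have e51s := e51.symm
  have d13s := d13.symm; have d24s := d24.symm; have d35s := d35.symm; have d14s := d14.symm
  have d25s := d25.symm
  have m1 : v1 ∈ H.verts := H.edge_vert h12
  have m2 : v2 ∈ H.verts := H.edge_vert h23
  have m3 : v3 ∈ H.verts := H.edge_vert h34
  have m4 : v4 ∈ H.verts := H.edge_vert h45
  have m5 : v5 ∈ H.verts := H.edge_vert h51
  let f : Fin 5 → H.verts := ![⟨v1,m1⟩, ⟨v3,m3⟩, ⟨v5,m5⟩, ⟨v2,m2⟩, ⟨v4,m4⟩]
  refine (hch 5 (by norm_num)).false ⟨⟨f, ?_⟩, ?_⟩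
  · intro i j
    fin_cases i <;> fin_cases j <;> simp_all [f, Subtype.ext_iff]
  · intro i j
    fin_cases i <;> fin_cases j <;>
      simp_all [f, compl_adj, Subgraph.coe_adj, Subtype.ext_iff, cycleGraph_adj] <;>
      first | decide | tauto

section Pivot
variable {F : V → V → Prop}
  (hg : 5 ≤ G.egirth)
  (hFG : ∀ {u v}, F u v → G.Adj u v)
  (hFs : ∀ {u v}, F u v → F v u)
  (hA : ∀ {a b c d}, F a b → F c d → a ≠ c → a ≠ d → b ≠ c → b ≠ d →
      (F a c ∨ F a d ∨ F b c ∨ F b d))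
  (hB : ∀ {u1 u2 u3 u4 u5}, F u1 u2 → F u2 u3 → F u3 u4 → F u4 u5 → F u5 u1 → False)

include hg hFG hFs hA hB

lemma aux_step1 {b c d x y : V} (hbc : F b c) (hcd : F c d) (hbd : b ≠ d)
    (hxy : F x y) (hxb : F x b) (hxc : x ≠ c) (hyb : y ≠ b) (hyc : y ≠ c) : False := by
  have gbc := hFG hbc; have gcd := hFG hcd; have gxy := hFG hxy; have gxb := hFG hxb
  have hxd : x ≠ d := by
    rintro rfl; exact aux_notri hg gbc gcd gxb
  have hyd : y ≠ d := by
    rintro rfl; exact aux_noc4 hg gxb gbc gcd gxy.symm hxc hbd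
  rcases hA hxy hcd hxc hxd hyc hyd with h | h | h | h
  · exact aux_notri hg gxb gbc (hFG h).symm
  · exact aux_noc4 hg gxb gbc gcd (hFG h).symm hxc hbd
  · exact aux_noc4 hg gxy (hFG h) gbc.symm gxb.symm hxc hyb
  · exact hB hxb hbc hcd (hFs h) (hFs hxy)

lemma aux_mainstep {a b c d : V} (hab : F a b) (hbc : F b c) (hcd : F c d)
    (hca : c ≠ a) (hbd : b ≠ d) :
    ∀ u v, F u v → u = b ∨ u = c ∨ v = b ∨ v = c := by
  intro u v huv
  by_contra hcon
  push_neg at hcon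
  obtain ⟨hub, huc, hvb, hvc⟩ := hcon
  rcases hA huv hbc hub huc hvb hvc with h | h | h | h
  · exact aux_step1 hg @hFG @hFs @hA @hB hbc hcd hbd huv h huc hvb hvc
  · exact aux_step1 hg @hFG @hFs @hA @hB (hFs hbc) (hFs hab) hca huv h hub hvc hvb
  · exact aux_step1 hg @hFG @hFs @hA @hB hbc hcd hbd (hFs huv) h hvc hub huc
  · exact aux_step1 hg @hFG @hFs @hA @hB (hFs hbc) (hFs hab) hca (hFs huv) h hvb huc hub

lemma aux_pivot (hne : ∃ x y, F x y) :
    ∃ p q, F p q ∧ ∀ u v, F u v → u = p ∨ u = q ∨ v = p ∨ v = q := by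
  obtain ⟨x0, y0, h0⟩ := hne
  by_cases hdisj : ∃ a b c d, F a b ∧ F c d ∧ a ≠ c ∧ a ≠ d ∧ b ≠ c ∧ b ≠ d
  · obtain ⟨a, b, c, d, hab, hcd, hac, had, hbc, hbd⟩ := hdisj
    have hdc : d ≠ c := (hFG hcd).ne'
    have hba : b ≠ a := (hFG hab).ne'
    rcases hA hab hcd hac had hbc hbd with h | h | h | h
    · exact ⟨a, c, h, aux_mainstep hg @hFG @hFs @hA @hB (hFs hab) h hcd hbc.symm had⟩
    · exact ⟨a, d, h, aux_mainstep hg @hFG @hFs @hA @hB (hFs hab) h (hFs hcd) hbd.symm hac⟩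
    · exact ⟨b, c, h, aux_mainstep hg @hFG @hFs @hA @hB hab h hcd hac.symm hbd⟩
    · exact ⟨b, d, h, aux_mainstep hg @hFG @hFs @hA @hB hab h (hFs hcd) had.symm hbc⟩
  · refine ⟨x0, y0, h0, ?_⟩
    intro u v huv
    by_contra hcon
    push_neg at hcon
    exact hdisj ⟨u, v, x0, y0, huv, h0, hcon.1, hcon.2.1, hcon.2.2.1, hcon.2.2.2⟩
end Pivot

end AuxProofs2

open scoped Classical in
noncomputable def auxAdjP (D : Finset (Sym2 V)) : ℕ :=
  ((D ×ˢ D).filter fun p => p.1 ≠ p.2 ∧ ∃ x, x ∈ p.1 ∧ x ∈ p.2).card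

lemma aux_swap (G : SimpleGraph V) :
    ∀ n p (D : Finset (Sym2 V)), D.card ≤ n → auxAdjP D ≤ p →
    (∀ f ∈ D, f ∈ G.edgeSet) → (∀ e ∈ G.edgeSet, ∃ f ∈ D, ∃ x, x ∈ e ∧ x ∈ f) →
    ∃ M : Finset (Sym2 V), (∀ f ∈ M, f ∈ G.edgeSet) ∧
      (∀ e ∈ M, ∀ f ∈ M, e ≠ f → ∀ x, x ∈ e → x ∉ f) ∧
      (∀ e ∈ G.edgeSet, ∃ f ∈ M, ∃ x, x ∈ e ∧ x ∈ f) ∧ M.card ≤ D.card := by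
  classical
  have step : ∀ n p (D : Finset (Sym2 V)),
      (∀ p' (D' : Finset (Sym2 V)), D'.card ≤ n → auxAdjP D' ≤ p' →
        (∀ f ∈ D', f ∈ G.edgeSet) → (∀ e ∈ G.edgeSet, ∃ f ∈ D', ∃ x, x ∈ e ∧ x ∈ f) →
        ∃ M : Finset (Sym2 V), (∀ f ∈ M, f ∈ G.edgeSet) ∧
          (∀ e ∈ M, ∀ f ∈ M, e ≠ f → ∀ x, x ∈ e → x ∉ f) ∧
          (∀ e ∈ G.edgeSet, ∃ f ∈ M, ∃ x, x ∈ e ∧ x ∈ f) ∧ M.card ≤ D'.card) →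
      (∀ (D' : Finset (Sym2 V)), D'.card ≤ n + 1 → auxAdjP D' ≤ p →
        (∀ f ∈ D', f ∈ G.edgeSet) → (∀ e ∈ G.edgeSet, ∃ f ∈ D', ∃ x, x ∈ e ∧ x ∈ f) →
        ∃ M : Finset (Sym2 V), (∀ f ∈ M, f ∈ G.edgeSet) ∧
          (∀ e ∈ M, ∀ f ∈ M, e ≠ f → ∀ x, x ∈ e → x ∉ f) ∧
          (∀ e ∈ G.edgeSet, ∃ f ∈ M, ∃ x, x ∈ e ∧ x ∈ f) ∧ M.card ≤ D'.card) →
      D.card ≤ n + 1 → auxAdjP D ≤ p + 1 →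
      (∀ f ∈ D, f ∈ G.edgeSet) → (∀ e ∈ G.edgeSet, ∃ f ∈ D, ∃ x, x ∈ e ∧ x ∈ f) →
      ∃ M : Finset (Sym2 V), (∀ f ∈ M, f ∈ G.edgeSet) ∧
        (∀ e ∈ M, ∀ f ∈ M, e ≠ f → ∀ x, x ∈ e → x ∉ f) ∧
        (∀ e ∈ G.edgeSet, ∃ f ∈ M, ∃ x, x ∈ e ∧ x ∈ f) ∧ M.card ≤ D.card := by
    intro n p D ihn ihp hc hp hDE hdom
    by_cases hmatch : ∀ e ∈ D, ∀ f ∈ D, e ≠ f → ∀ x, x ∈ e → x ∉ f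
    · exact ⟨D, hDE, hmatch, hdom, le_rfl⟩
    push_neg at hmatch
    obtain ⟨e, he, f, hf, hef, x, hxe, hxf⟩ := hmatch
    obtain ⟨w, rfl⟩ := Sym2.mem_iff_exists.mp hxf
    have heD : e ∈ D.erase s(x, w) := Finset.mem_erase.mpr ⟨hef, he⟩
    by_cases hcase : ∀ g ∈ G.edgeSet, w ∈ g → ∃ h ∈ D.erase s(x, w), ∃ y, y ∈ g ∧ y ∈ h
    · -- delete f
      have hdom1 : ∀ g ∈ G.edgeSet, ∃ h ∈ D.erase s(x, w), ∃ y, y ∈ g ∧ y ∈ h := by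
        intro g hg
        obtain ⟨h, hh, y, hyg, hyh⟩ := hdom g hg
        by_cases hhf : h = s(x, w)
        · subst hhf
          rcases Sym2.mem_iff.mp hyh with rfl | rfl
          · exact ⟨e, heD, y, hyg, hxe⟩
          · exact hcase g hg hyg
        · exact ⟨h, Finset.mem_erase.mpr ⟨hhf, hh⟩, y, hyg, hyh⟩
      have hc1 : (D.erase s(x, w)).card ≤ n := by
        have := Finset.card_erase_of_mem hf
        omega
      obtain ⟨M, h1, h2, h3, h4⟩ := ihn (auxAdjP (D.erase s(x, w))) _ hc1 le_rfl
        (fun g hg => hDE g (Finset.mem_of_mem_erase hg)) hdom1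
      exact ⟨M, h1, h2, h3, h4.trans ((Finset.card_erase_of_mem hf).le.trans (by omega))⟩
    · -- swap f for a pendant edge at w
      push_neg at hcase
      obtain ⟨g, hg, hwg, hgind⟩ := hcase
      set D2 : Finset (Sym2 V) := insert g (D.erase s(x, w)) with hD2
      have hgne : g ∉ D.erase s(x, w) := fun hmem => hgind g hmem w hwg hwg
      have hfne : s(x, w) ≠ g := by
        rintro rfl
        exact hgind e heD x (Sym2.mem_mk_left x w) hxe
      have hfD2 : s(x, w) ∉ D2 := by
        simp only [hD2, Finset.mem_insert, Finset.mem_erase]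
        rintro (h | h)
        · exact hfne h
        · exact h.1 rfl
      have hcard2 : D2.card = D.card := by
        rw [hD2, Finset.card_insert_of_notMem hgne, Finset.card_erase_of_mem hf]
        have : 0 < D.card := Finset.card_pos.mpr ⟨_, hf⟩
        omega
      have hDE2 : ∀ h ∈ D2, h ∈ G.edgeSet := by
        intro h hh
        rcases Finset.mem_insert.mp hh with rfl | hh
        · exact hg
        · exact hDE h (Finset.mem_of_mem_erase hh)
      have hdom2 : ∀ h ∈ G.edgeSet, ∃ k ∈ D2, ∃ y, y ∈ h ∧ y ∈ k := by
        intro h hh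
        obtain ⟨k, hk, y, hyh, hyk⟩ := hdom h hh
        by_cases hkf : k = s(x, w)
        · subst hkf
          rcases Sym2.mem_iff.mp hyk with rfl | rfl
          · exact ⟨e, Finset.mem_insert_of_mem heD, y, hyh, hxe⟩
          · exact ⟨g, Finset.mem_insert_self _ _, y, hyh, hwg⟩
        · exact ⟨k, Finset.mem_insert_of_mem (Finset.mem_erase.mpr ⟨hkf, hk⟩), y, hyh, hyk⟩
      have hadj2 : auxAdjP D2 < auxAdjP D := by
        classical
        apply Finset.card_lt_card
        rw [Finset.ssubset_iff_of_subset]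
        · refine ⟨(e, s(x, w)), ?_, ?_⟩
          · simp only [Finset.mem_filter, Finset.mem_product]
            exact ⟨⟨he, hf⟩, hef, x, hxe, Sym2.mem_mk_left x w⟩
          · simp only [Finset.mem_filter, Finset.mem_product]
            rintro ⟨⟨-, habs⟩, -⟩
            exact hfD2 habs
        · intro q hq
          simp only [Finset.mem_filter, Finset.mem_product] at hq ⊢
          obtain ⟨⟨hq1, hq2⟩, hne, y, hy1, hy2⟩ := hq
          have hq1' : q.1 ∈ D.erase s(x, w) := by
            rcases Finset.mem_insert.mp hq1 with h1 | h1
            · exfalso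
              rcases Finset.mem_insert.mp hq2 with h2 | h2
              · exact hne (h1.trans h2.symm)
              · exact hgind q.2 h2 y (h1 ▸ hy1) hy2
            · exact h1
          have hq2' : q.2 ∈ D.erase s(x, w) := by
            rcases Finset.mem_insert.mp hq2 with h2 | h2
            · exact False.elim (hgind q.1 hq1' y (h2 ▸ hy2) hy1)
            · exact h2
          exact ⟨⟨Finset.mem_of_mem_erase hq1', Finset.mem_of_mem_erase hq2'⟩, hne, y, hy1, hy2⟩
      have hp2 : auxAdjP D2 ≤ p := by omega
      obtain ⟨M, h1, h2, h3, h4⟩ := ihp D2 (hcard2 ▸ hc) hp2 hDE2 hdom2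
      exact ⟨M, h1, h2, h3, h4.trans_eq hcard2⟩
  intro n
  induction n with
  | zero =>
    intro p D hc _ hDE hdom
    have : D = ∅ := Finset.card_eq_zero.mp (Nat.le_zero.mp hc)
    subst this
    exact ⟨∅, hDE, by simp, hdom, le_rfl⟩
  | succ n ihn =>
    intro p
    induction p with
    | zero =>
      intro D hc hp hDE hdom
      by_cases hmatch : ∀ e ∈ D, ∀ f ∈ D, e ≠ f → ∀ x, x ∈ e → x ∉ f
      · exact ⟨D, hDE, hmatch, hdom, le_rfl⟩
      · exfalso
        push_neg at hmatch
        obtain ⟨e, he, f, hf, hef, x, hxe, hxf⟩ := hmatch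
        have : (e, f) ∈ ((D ×ˢ D).filter fun q => q.1 ≠ q.2 ∧ ∃ y, y ∈ q.1 ∧ y ∈ q.2) := by
          simp only [Finset.mem_filter, Finset.mem_product]
          exact ⟨⟨he, hf⟩, hef, x, hxe, hxf⟩
        have hpos : 0 < auxAdjP D := by
          rw [auxAdjP]
          exact Finset.card_pos.mpr ⟨_, by convert this⟩
        omega
    | succ p ihp =>
      intro D hc hp hDE hdom
      exact step n p D ihn ihp hc hp hDE hdom

lemma aux_sym2_eq (e : Sym2 V) : ∃ u v, e = s(u, v) := by
  induction e using Sym2.ind with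
  | _ u v => exact ⟨u, v, rfl⟩


section Equim
variable [Fintype V] {G : SimpleGraph V}

lemma aux_ncard {M : Finset (Sym2 V)} (hM1 : ∀ e ∈ M, e ∈ G.edgeSet) :
    {e : G.edgeSet | ↑e ∈ M}.ncard = M.card := by
  have himg : Subtype.val '' {e : G.edgeSet | ↑e ∈ M} = ↑M := by
    ext x
    constructor
    · rintro ⟨⟨y, hy⟩, hmem, rfl⟩
      exact hmem
    · intro hx
      exact ⟨⟨x, hM1 x hx⟩, hx, rfl⟩
  rw [← Set.ncard_coe_finset M, ← himg, Set.ncard_image_of_injective _ Subtype.val_injective]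

lemma aux_maxIndep {M : Finset (Sym2 V)} (hM1 : ∀ e ∈ M, e ∈ G.edgeSet)
    (hM2 : ∀ e ∈ M, ∀ f ∈ M, e ≠ f → ∀ x : V, x ∈ e → x ∉ f)
    (hMdom : ∀ e ∈ G.edgeSet, ∃ f ∈ M, ∃ x, x ∈ e ∧ x ∈ f) :
    MaxIndep G.lineGraph {e : G.edgeSet | ↑e ∈ M} := by
  constructor
  · intro u hu v hv hadj
    obtain ⟨hne, x, hx1, hx2⟩ := lineGraph_adj_iff_exists.mp hadj
    exact hM2 ↑u hu ↑v hv (fun h => hne (Subtype.ext h)) x hx1 hx2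
  · intro T hT hST
    apply Set.Subset.antisymm hST
    intro t ht
    obtain ⟨f, hf, x, hx1, hx2⟩ := hMdom ↑t t.2
    have hfS : (⟨f, hM1 f hf⟩ : G.edgeSet) ∈ {e : G.edgeSet | ↑e ∈ M} := hf
    by_cases hteq : t = ⟨f, hM1 f hf⟩
    · rw [hteq]; exact hfS
    · exact absurd (lineGraph_adj_iff_exists.mpr ⟨hteq, x, hx1, hx2⟩) (hT ht (hST hfS))

lemma aux_equim (hwc : WellCovered G.lineGraph) {M N : Finset (Sym2 V)}
    (hM1 : ∀ e ∈ M, e ∈ G.edgeSet)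
    (hM2 : ∀ e ∈ M, ∀ f ∈ M, e ≠ f → ∀ x : V, x ∈ e → x ∉ f)
    (hMdom : ∀ e ∈ G.edgeSet, ∃ f ∈ M, ∃ x, x ∈ e ∧ x ∈ f)
    (hN1 : ∀ e ∈ N, e ∈ G.edgeSet)
    (hN2 : ∀ e ∈ N, ∀ f ∈ N, e ≠ f → ∀ x : V, x ∈ e → x ∉ f)
    (hNdom : ∀ e ∈ G.edgeSet, ∃ f ∈ N, ∃ x, x ∈ e ∧ x ∈ f) :
    M.card = N.card := by
  have h := hwc _ _ (aux_maxIndep hM1 hM2 hMdom) (aux_maxIndep hN1 hN2 hNdom)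
  rwa [aux_ncard hM1, aux_ncard hN1] at h

lemma aux_opt (G : SimpleGraph V) [Fintype V] :
    ∃ M : Finset (Sym2 V), (∀ e ∈ M, e ∈ G.edgeSet) ∧
      (∀ e ∈ M, ∀ f ∈ M, e ≠ f → ∀ x : V, x ∈ e → x ∉ f) ∧
      (∀ e ∈ G.edgeSet, ∃ f ∈ M, ∃ x, x ∈ e ∧ x ∈ f) ∧ M.card = matchNum G := by
  classical
  set A := {n | ∃ M : Finset (Sym2 V), IsMatchingSet G M ∧ M.card = n} with hA
  have h0 : 0 ∈ A := ⟨∅, ⟨by simp, by simp⟩, by simp⟩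
  have hbdd : BddAbove A := by
    refine ⟨Fintype.card (Sym2 V), ?_⟩
    rintro n ⟨M, -, rfl⟩
    exact Finset.card_le_univ M
  have hmem : matchNum G ∈ A := Nat.sSup_mem ⟨0, h0⟩ hbdd
  obtain ⟨M, hM, hcard⟩ := hmem
  refine ⟨M, hM.1, hM.2, ?_, hcard⟩
  intro e he
  by_contra hcon
  push_neg at hcon
  have heM : e ∉ M := by
    intro hem
    obtain ⟨u, v, rfl⟩ := aux_sym2_eq e
    exact hcon s(u, v) hem u (Sym2.mem_mk_left u v) (Sym2.mem_mk_left u v)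
  have hmem2 : (insert e M).card ∈ A := by
    refine ⟨insert e M, ⟨?_, ?_⟩, rfl⟩
    · intro f hf
      rcases Finset.mem_insert.mp hf with rfl | hf
      · exact he
      · exact hM.1 f hf
    · intro f hf g hg hfg x hxf
      rcases Finset.mem_insert.mp hf with rfl | hf' <;>
        rcases Finset.mem_insert.mp hg with rfl | hg'
      · exact absurd rfl hfg
      · exact hcon g hg' x hxf
      · intro hxe
        exact hcon f hf' x hxe hxf
      · exact hM.2 f hf' g hg' hfg x hxf
  have hle := le_csSup hbdd hmem2
  rw [Finset.card_insert_of_notMem heM, hcard] at hle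
  have hAA : matchNum G = sSup A := rfl
  omega

end Equim

/-- for a connected graph of girth at least `5` whose line graph is
well-covered, `cochord(G) = m(G)`. -/
theorem cochord_eq_matchNum [Fintype V] (G : SimpleGraph V)
    (hconn : G.Connected) (hne : G.edgeSet.Nonempty) (hg : 5 ≤ G.egirth)
    (hwc : WellCovered G.lineGraph) : cochord G = matchNum G := by
  classical
  obtain ⟨M0, hM01, hM02, hM0dom, hM0card⟩ := aux_opt G
  set m := matchNum G with hm
  have hmemset : m ∈ {k | ∃ H : Fin k → G.Subgraph, (∀ i, Chordal ((H i).coeᶜ)) ∧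
      ∀ e ∈ G.edgeSet, ∃ i, e ∈ (H i).edgeSet} := by
    have ε := (Finset.equivFinOfCardEq hM0card)
    refine ⟨fun i => auxStar G ↑(ε.symm i), fun i => ?_, fun e he => ?_⟩
    · exact aux_star_chordal G _ (hM01 _ (ε.symm i).2)
    · obtain ⟨f, hf, x, hx1, hx2⟩ := hM0dom e he
      refine ⟨ε ⟨f, hf⟩, ?_⟩
      obtain ⟨u, v, rfl⟩ := aux_sym2_eq e
      show s(u, v) ∈ (auxStar G ↑(ε.symm (ε ⟨f, hf⟩))).edgeSet
      rw [Equiv.symm_apply_apply, Subgraph.mem_edgeSet, auxStar_adj]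
      refine ⟨he, ?_⟩
      rcases Sym2.mem_iff.mp hx1 with rfl | rfl
      · exact Or.inl hx2
      · exact Or.inr hx2
  have hub : cochord G ≤ m := Nat.sInf_le hmemset
  have hlb : ∀ k ∈ {k | ∃ H : Fin k → G.Subgraph, (∀ i, Chordal ((H i).coeᶜ)) ∧
      ∀ e ∈ G.edgeSet, ∃ i, e ∈ (H i).edgeSet}, m ≤ k := by
    rintro k ⟨H, hch, hcov⟩
    have hpiv : ∀ i : Fin k, ∃ e : Sym2 V, e ∈ G.edgeSet ∧
        ∀ u v, (H i).Adj u v → ∃ x, (x = u ∨ x = v) ∧ x ∈ e := by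
      intro i
      by_cases hne_i : ∃ u v, (H i).Adj u v
      · have hA : ∀ {a b c d}, (H i).Adj a b → (H i).Adj c d → a ≠ c → a ≠ d → b ≠ c → b ≠ d →
            ((H i).Adj a c ∨ (H i).Adj a d ∨ (H i).Adj b c ∨ (H i).Adj b d) := by
          intro a b c d h1 h2 hac had hbc hbd
          by_contra hc
          push_neg at hc
          exact aux_LA (hch i) h1 h2 hac had hbc hbd hc.1 hc.2.1 hc.2.2.1 hc.2.2.2
        obtain ⟨p, q, hpq, hcover⟩ := aux_pivot hg (fun h => (H i).adj_sub h)
          (fun h => h.symm) hA (fun h1 h2 h3 h4 h5 => aux_LB hg (hch i) h1 h2 h3 h4 h5) hne_i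
        refine ⟨s(p, q), (H i).adj_sub hpq, ?_⟩
        intro u v huv
        rcases hcover u v huv with rfl | rfl | rfl | rfl
        · exact ⟨u, Or.inl rfl, Sym2.mem_mk_left u q⟩
        · exact ⟨u, Or.inl rfl, Sym2.mem_mk_right p u⟩
        · exact ⟨v, Or.inr rfl, Sym2.mem_mk_left v q⟩
        · exact ⟨v, Or.inr rfl, Sym2.mem_mk_right p v⟩
      · exact ⟨hne.choose, hne.choose_spec, fun u v huv => absurd ⟨u, v, huv⟩ hne_i⟩
    choose g hg1 hg2 using hpiv
    set D : Finset (Sym2 V) := Finset.image g Finset.univ with hD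
    have hD1 : ∀ f ∈ D, f ∈ G.edgeSet := by
      intro f hf
      obtain ⟨i, -, rfl⟩ := Finset.mem_image.mp hf
      exact hg1 i
    have hDdom : ∀ e ∈ G.edgeSet, ∃ f ∈ D, ∃ x, x ∈ e ∧ x ∈ f := by
      intro e he
      obtain ⟨i, hi⟩ := hcov e he
      obtain ⟨u, v, rfl⟩ := aux_sym2_eq e
      obtain ⟨x, hx1, hx2⟩ := hg2 i u v (Subgraph.mem_edgeSet.mp hi)
      refine ⟨g i, Finset.mem_image_of_mem g (Finset.mem_univ i), x, ?_, hx2⟩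
      rcases hx1 with rfl | rfl
      · exact Sym2.mem_mk_left x v
      · exact Sym2.mem_mk_right u x
    have hDcard : D.card ≤ k := by
      calc D.card ≤ Finset.univ.card := Finset.card_image_le
      _ = k := by simp
    obtain ⟨M, h1, h2, hdom, hcard⟩ := aux_swap G D.card (auxAdjP D) D le_rfl le_rfl hD1 hDdom
    have heq : M.card = M0.card := aux_equim hwc h1 h2 hdom hM01 hM02 hM0dom
    omega
  exact le_antisymm hub (le_csInf ⟨m, hmemset⟩ hlb)
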